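/- For every nonzero real number t₀, if S_{t₀}(N) is a discrete subgroup of GL₂(ℝ), then the full image S_{t₀}(B₃) is a discrete subgroup of GL₂(ℝ). -/

import Mathlib

open Matrix
open scoped MatrixGroups

/-- The braid relations on `m` generators. -/
def braidRels (m : ℕ) : Set (FreeGroup (Fin m)) :=
  { r | (∃ i j : Fin m, (i : ℕ) + 1 = (j : ℕ) ∧
          r = FreeGroup.of i * FreeGroup.of j * FreeGroup.of i *
              (FreeGroup.of j * FreeGroup.of i * FreeGroup.of j)⁻¹) ∨
        (∃ i j : Fin m, (i : ℕ) + 2 ≤ (j : ℕ) ∧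
          r = FreeGroup.of i * FreeGroup.of j * (FreeGroup.of j * FreeGroup.of i)⁻¹) }

/-- The braid group on `n` strands, presented by `n-1` generators and the braid relations. -/
abbrev BraidGroup (n : ℕ) : Type := PresentedGroup (braidRels (n - 1))

/-- The braid group on three strands. -/
abbrev B3 : Type := BraidGroup 3

/-- The standard generators of `B3`. -/
def b3 (i : Fin 2) : B3 := PresentedGroup.of i

/-- `S` is the Burau specialization of `B3` at the real parameter `t₀`. -/
def IsBurau3 (t₀ : ℝ) (S : B3 →* GL (Fin 2) ℝ) : Prop :=
  (S (b3 0) : Matrix (Fin 2) (Fin 2) ℝ) = !![-t₀, 1; 0, 1] ∧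
  (S (b3 1) : Matrix (Fin 2) (Fin 2) ℝ) = !![1, 0; t₀, -t₀]

/-- The element `a₁ = σ₁⁻¹σ₂` of `B3`. -/
def a₁ : B3 := (b3 0)⁻¹ * b3 1

/-- The element `a₂ = σ₂σ₁⁻¹` of `B3`. -/
def a₂ : B3 := b3 1 * (b3 0)⁻¹

/-- The (normal) subgroup `N` of `B3` generated by `a₁` and `a₂`. -/
def N3 : Subgroup B3 := Subgroup.closure {a₁, a₂}


lemma braid : b3 0 * b3 1 * b3 0 = b3 1 * b3 0 * b3 1 := by
  have hr : (FreeGroup.of (0 : Fin 2) * FreeGroup.of (1 : Fin 2) * FreeGroup.of 0 *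
      (FreeGroup.of 1 * FreeGroup.of 0 * FreeGroup.of 1)⁻¹) ∈ braidRels 2 := by
    left; exact ⟨0, 1, by decide, rfl⟩
  have h1 : PresentedGroup.mk (braidRels 2)
      (FreeGroup.of (0 : Fin 2) * FreeGroup.of 1 * FreeGroup.of 0 *
      (FreeGroup.of 1 * FreeGroup.of 0 * FreeGroup.of 1)⁻¹) = 1 := by
    exact (QuotientGroup.eq_one_iff _).2 (Subgroup.subset_normalClosure hr)
  simp only [_root_.map_mul, map_inv] at h1
  have h2 := mul_eq_one_iff_eq_inv.mp h1
  rw [inv_inv] at h2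
  exact h2

noncomputable def e : B3 →* Multiplicative ℤ :=
  PresentedGroup.toGroup (f := fun _ : Fin 2 => Multiplicative.ofAdd (1:ℤ)) (by
    rintro r (⟨i, j, -, rfl⟩ | ⟨i, j, -, rfl⟩) <;>
    · simp only [_root_.map_mul, map_inv, FreeGroup.lift_apply_of]
      group)

@[simp] lemma e_b3 (i : Fin 2) : e (b3 i) = Multiplicative.ofAdd (1:ℤ) :=
  PresentedGroup.toGroup.of _

lemma conj1 : b3 0 * a₁ * (b3 0)⁻¹ = a₂ := by unfold a₁ a₂; group
lemma conj4 : (b3 0)⁻¹ * a₂ * b3 0 = a₁ := by unfold a₁ a₂; group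
lemma conj2 : b3 0 * a₂ * (b3 0)⁻¹ = a₁⁻¹ * a₂ := by
  unfold a₁ a₂
  have big : b3 1 * (b3 0 * (b3 1 * (b3 0)⁻¹) * (b3 0)⁻¹) * b3 0
      = b3 1 * (((b3 0)⁻¹ * b3 1)⁻¹ * (b3 1 * (b3 0)⁻¹)) * b3 0 := by
    calc b3 1 * (b3 0 * (b3 1 * (b3 0)⁻¹) * (b3 0)⁻¹) * b3 0
        = (b3 1 * b3 0 * b3 1) * (b3 0)⁻¹ := by group
      _ = (b3 0 * b3 1 * b3 0) * (b3 0)⁻¹ := by rw [braid]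
      _ = b3 0 * b3 1 := by group
      _ = b3 1 * (((b3 0)⁻¹ * b3 1)⁻¹ * (b3 1 * (b3 0)⁻¹)) * b3 0 := by group
  exact mul_left_cancel (mul_right_cancel big)
lemma conj3 : (b3 0)⁻¹ * a₁ * b3 0 = a₁ * a₂⁻¹ := by
  unfold a₁ a₂
  have big : b3 0 * (b3 0 * (((b3 0)⁻¹ * ((b3 0)⁻¹ * b3 1) * b3 0) * b3 1))
      = b3 0 * (b3 0 * ((((b3 0)⁻¹ * b3 1) * (b3 1 * (b3 0)⁻¹)⁻¹) * b3 1)) := by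
    calc b3 0 * (b3 0 * (((b3 0)⁻¹ * ((b3 0)⁻¹ * b3 1) * b3 0) * b3 1))
        = b3 1 * b3 0 * b3 1 := by group
      _ = b3 0 * b3 1 * b3 0 := braid.symm
      _ = b3 0 * (b3 0 * ((((b3 0)⁻¹ * b3 1) * (b3 1 * (b3 0)⁻¹)⁻¹) * b3 1)) := by group
  exact mul_right_cancel (mul_left_cancel (mul_left_cancel big))

lemma ha₁ : a₁ ∈ N3 := Subgroup.subset_closure (by left; rfl)
lemma ha₂ : a₂ ∈ N3 := Subgroup.subset_closure (by right; rfl)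

lemma mem_conj : ∀ h ∈ N3, b3 0 * h * (b3 0)⁻¹ ∈ N3 := by
  intro h hh
  have : Subgroup.map (MulAut.conj (b3 0)).toMonoidHom N3 ≤ N3 := by
    rw [N3, MonoidHom.map_closure, Subgroup.closure_le]
    rintro x ⟨y, (rfl | rfl), rfl⟩
    · simpa [MulAut.conj_apply, conj1] using (show a₂ ∈ Subgroup.closure {a₁, a₂} from ha₂)
    · simp only [MulEquiv.coe_toMonoidHom, MulAut.conj_apply]
      rw [conj2]
      exact mul_mem (inv_mem ha₁) ha₂
  exact this ⟨h, hh, rfl⟩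

lemma mem_conj' : ∀ h ∈ N3, (b3 0)⁻¹ * h * b3 0 ∈ N3 := by
  intro h hh
  have : Subgroup.map (MulAut.conj (b3 0)⁻¹).toMonoidHom N3 ≤ N3 := by
    rw [N3, MonoidHom.map_closure, Subgroup.closure_le]
    rintro x ⟨y, (rfl | rfl), rfl⟩
    · simp only [MulEquiv.coe_toMonoidHom, MulAut.conj_apply, inv_inv]
      rw [conj3]
      exact mul_mem ha₁ (inv_mem ha₂)
    · simpa [MulAut.conj_apply, conj4] using (show a₁ ∈ Subgroup.closure {a₁, a₂} from ha₁)
  exact this ⟨h, hh, rfl⟩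

lemma b3_zero_mem_normalizer : b3 0 ∈ Subgroup.normalizer (N3 : Set B3) := by
  rw [Subgroup.mem_normalizer_iff]
  intro h
  constructor
  · exact mem_conj h
  · intro hh
    have := mem_conj' _ hh
    simpa [mul_assoc] using this

lemma conj_zpow_mem (n : ℤ) {h : B3} (hh : h ∈ N3) : (b3 0)^n * h * (b3 0)^(-n) ∈ N3 := by
  have hmem : (b3 0)^n ∈ Subgroup.normalizer (N3 : Set B3) := zpow_mem b3_zero_mem_normalizer n
  rw [Subgroup.mem_normalizer_iff] at hmem
  simpa [_root_.zpow_neg] using (hmem h).mp hh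

def K : Subgroup B3 where
  carrier := {g | g * (b3 0)^(-(Multiplicative.toAdd (e g))) ∈ N3}
  one_mem' := by
    simpa using one_mem N3
  mul_mem' := by
    intro x y hx hy
    simp only [Set.mem_setOf_eq] at *
    have he : Multiplicative.toAdd (e (x * y))
        = Multiplicative.toAdd (e x) + Multiplicative.toAdd (e y) := by
      rw [_root_.map_mul]; rfl
    have key : x * y * (b3 0)^(-(Multiplicative.toAdd (e x) + Multiplicative.toAdd (e y)))
        = (x * (b3 0)^(-(Multiplicative.toAdd (e x)))) *
          ((b3 0)^(Multiplicative.toAdd (e x)) *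
            (y * (b3 0)^(-(Multiplicative.toAdd (e y)))) *
            (b3 0)^(-(Multiplicative.toAdd (e x)))) := by
      rw [neg_add, _root_.zpow_add]
      group
    rw [he, key]
    exact mul_mem hx (conj_zpow_mem _ hy)
  inv_mem' := by
    intro x hx
    simp only [Set.mem_setOf_eq] at *
    have he : Multiplicative.toAdd (e x⁻¹) = -(Multiplicative.toAdd (e x)) := by
      rw [map_inv]; rfl
    have key : x⁻¹ * (b3 0)^(-(-(Multiplicative.toAdd (e x))))
        = (b3 0)^(-(Multiplicative.toAdd (e x))) *
          (x * (b3 0)^(-(Multiplicative.toAdd (e x))))⁻¹ *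
          (b3 0)^(-(-(Multiplicative.toAdd (e x)))) := by
      group
    rw [he, key]
    exact conj_zpow_mem (-(Multiplicative.toAdd (e x))) (inv_mem hx)

lemma decomp (g : B3) : g * (b3 0)^(-(Multiplicative.toAdd (e g))) ∈ N3 := by
  have h0 : b3 0 * (b3 0)^(-(Multiplicative.toAdd (e (b3 0)))) ∈ N3 := by
    rw [e_b3]
    simpa using one_mem N3
  have h1 : b3 1 * (b3 0)^(-(Multiplicative.toAdd (e (b3 1)))) ∈ N3 := by
    rw [e_b3]
    have : b3 1 * (b3 0)^(-(Multiplicative.toAdd (Multiplicative.ofAdd (1:ℤ)))) = a₂ := by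
      rw [a₂]; simp [_root_.zpow_neg]
    rw [this]
    exact ha₂
  have : g ∈ K := by
    apply PresentedGroup.generated_by
    intro j
    fin_cases j
    · exact h0
    · exact h1
  exact this

section Top
-- instance checks
example : IsTopologicalGroup (GL (Fin 2) ℝ) := inferInstance
example (H : Subgroup (GL (Fin 2) ℝ)) : IsTopologicalGroup ↥H := inferInstance

lemma discrete_of_open_one {H : Subgroup (GL (Fin 2) ℝ)} (U : Set (GL (Fin 2) ℝ))
    (hU : IsOpen U) (h1 : (1 : GL (Fin 2) ℝ) ∈ U)
    (hsub : ∀ x ∈ U, x ∈ H → x = 1) : DiscreteTopology ↥H := by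
  rw [discreteTopology_iff_isOpen_singleton_one]
  have : ({1} : Set ↥H) = Subtype.val ⁻¹' U := by
    ext x
    simp only [Set.mem_singleton_iff, Set.mem_preimage]
    constructor
    · rintro rfl; exact h1
    · intro hx
      exact Subtype.ext (hsub _ hx x.2)
  rw [this]
  exact hU.preimage continuous_subtype_val

lemma exists_open_of_discrete {H : Subgroup (GL (Fin 2) ℝ)} (h : DiscreteTopology ↥H) :
    ∃ V : Set (GL (Fin 2) ℝ), IsOpen V ∧ (1 : GL (Fin 2) ℝ) ∈ V ∧
      ∀ x ∈ V, x ∈ H → x = 1 := by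
  have ho : IsOpen ({1} : Set ↥H) := discreteTopology_iff_isOpen_singleton_one.mp h
  rw [isOpen_induced_iff] at ho
  obtain ⟨V, hV, hpre⟩ := ho
  refine ⟨V, hV, ?_, ?_⟩
  · have h1 : (1 : ↥H) ∈ Subtype.val ⁻¹' V := by rw [hpre]; rfl
    simpa using h1
  · intro x hx hxH
    have h2 : (⟨x, hxH⟩ : ↥H) ∈ Subtype.val ⁻¹' V := hx
    rw [hpre] at h2
    simpa using congrArg Subtype.val h2
end Top

section Zpow
lemma aux_zpow_zero {c : ℝ} (hc : 1 < c) (n : ℤ) (h1 : c⁻¹ < c ^ n) (h2 : c ^ n < c) :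
    n = 0 := by
  by_contra hn
  rcases lt_or_gt_of_ne hn with h | h
  · have : c ^ n ≤ c ^ (-1 : ℤ) := zpow_le_zpow_right₀ hc.le (by omega)
    rw [_root_.zpow_neg_one] at this
    exact absurd (lt_of_lt_of_le h1 this) (lt_irrefl _)
  · have : c ^ (1 : ℤ) ≤ c ^ n := zpow_le_zpow_right₀ hc.le (by omega)
    rw [zpow_one] at this
    exact absurd (lt_of_lt_of_le h2 this) (lt_irrefl _)

lemma abs_zpow_zero {b : ℝ} (hb0 : 0 < b) (hb1 : b ≠ 1) (n : ℤ)
    (h1 : (max b b⁻¹)⁻¹ < b ^ n) (h2 : b ^ n < max b b⁻¹) : n = 0 := by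
  rcases lt_or_gt_of_ne hb1 with h | h
  · have hb' : 1 < b⁻¹ := (one_lt_inv₀ hb0).mpr h
    have hmax : max b b⁻¹ = b⁻¹ := max_eq_right (by nlinarith)
    rw [hmax] at h1 h2
    have hbn : b ^ n = (b⁻¹) ^ (-n) := by
      rw [_root_.zpow_neg, _root_.inv_zpow, inv_inv]
    rw [hbn] at h1 h2
    have := aux_zpow_zero hb' (-n) h1 h2
    omega
  · have hmax : max b b⁻¹ = b := max_eq_left (by nlinarith [inv_lt_one_of_one_lt₀ h])
    rw [hmax] at h1 h2
    exact aux_zpow_zero h n h1 h2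
end Zpow

def intM (M : Matrix (Fin 2) (Fin 2) ℝ) : Prop := ∀ i j, ∃ k : ℤ, (k : ℝ) = M i j

lemma intM_one : intM 1 := by
  intro i j
  fin_cases i <;> fin_cases j <;> [exact ⟨1, by simp⟩; exact ⟨0, by simp⟩;
    exact ⟨0, by simp⟩; exact ⟨1, by simp⟩]

lemma intM_mul {A B : Matrix (Fin 2) (Fin 2) ℝ} (hA : intM A) (hB : intM B) :
    intM (A * B) := by
  intro i j
  obtain ⟨k1, hk1⟩ := hA i 0
  obtain ⟨k2, hk2⟩ := hA i 1
  obtain ⟨l1, hl1⟩ := hB 0 j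
  obtain ⟨l2, hl2⟩ := hB 1 j
  refine ⟨k1 * l1 + k2 * l2, ?_⟩
  rw [Matrix.mul_apply, Fin.sum_univ_two]
  push_cast
  rw [hk1, hk2, hl1, hl2]

lemma intM_explicit {x y z w : ℝ} (hx : ∃ k : ℤ, (k:ℝ) = x) (hy : ∃ k : ℤ, (k:ℝ) = y)
    (hz : ∃ k : ℤ, (k:ℝ) = z) (hw : ∃ k : ℤ, (k:ℝ) = w) : intM !![x, y; z, w] := by
  intro i j
  fin_cases i <;> fin_cases j
  · simpa using hx
  · simpa using hy
  · simpa using hz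
  · simpa using hw

def intEntries : Subgroup (GL (Fin 2) ℝ) where
  carrier := {g | intM (g : Matrix (Fin 2) (Fin 2) ℝ) ∧
    intM ((g⁻¹ : GL (Fin 2) ℝ) : Matrix (Fin 2) (Fin 2) ℝ)}
  one_mem' := by
    refine ⟨intM_one, ?_⟩
    rw [inv_one]
    exact intM_one
  mul_mem' := by
    rintro a b ⟨ha, ha'⟩ ⟨hb, hb'⟩
    refine ⟨?_, ?_⟩
    · rw [Units.val_mul]; exact intM_mul ha hb
    · rw [_root_.mul_inv_rev, Units.val_mul]; exact intM_mul hb' ha'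
  inv_mem' := by
    rintro a ⟨ha, ha'⟩
    refine ⟨ha', ?_⟩
    rw [inv_inv]
    exact ha

lemma inv_val_eq (A : GL (Fin 2) ℝ) (B : Matrix (Fin 2) (Fin 2) ℝ)
    (h : (A : Matrix (Fin 2) (Fin 2) ℝ) * B = 1) :
    ((A⁻¹ : GL (Fin 2) ℝ) : Matrix (Fin 2) (Fin 2) ℝ) = B := by
  rw [Matrix.coe_units_inv]
  exact Matrix.inv_eq_right_inv h

-- open set of entrywise-near-1 elements
lemma isOpen_near_one : IsOpen {g : GL (Fin 2) ℝ |
    ∀ i j, |(g : Matrix (Fin 2) (Fin 2) ℝ) i j - (1 : Matrix (Fin 2) (Fin 2) ℝ) i j| < 1/2} := by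
  have : {g : GL (Fin 2) ℝ |
      ∀ i j, |(g : Matrix (Fin 2) (Fin 2) ℝ) i j - (1 : Matrix (Fin 2) (Fin 2) ℝ) i j| < 1/2}
      = ⋂ i, ⋂ j, {g : GL (Fin 2) ℝ |
        |(g : Matrix (Fin 2) (Fin 2) ℝ) i j - (1 : Matrix (Fin 2) (Fin 2) ℝ) i j| < 1/2} := by
    ext g; simp [Set.mem_iInter]
  rw [this]
  refine isOpen_iInter_of_finite fun i => isOpen_iInter_of_finite fun j => ?_
  have hc : Continuous (fun g : GL (Fin 2) ℝ =>
      |(g : Matrix (Fin 2) (Fin 2) ℝ) i j - (1 : Matrix (Fin 2) (Fin 2) ℝ) i j|) := by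
    have hv : Continuous (fun g : GL (Fin 2) ℝ => (g : Matrix (Fin 2) (Fin 2) ℝ)) :=
      Units.continuous_val
    exact ((hv.matrix_elem i j).sub continuous_const).abs
  exact isOpen_lt hc continuous_const

lemma isOpen_det_between (c : ℝ) : IsOpen {g : GL (Fin 2) ℝ |
    c⁻¹ < |((g : Matrix (Fin 2) (Fin 2) ℝ).det)| ∧ |((g : Matrix (Fin 2) (Fin 2) ℝ).det)| < c} := by
  have hv : Continuous (fun g : GL (Fin 2) ℝ => (g : Matrix (Fin 2) (Fin 2) ℝ)) :=
    Units.continuous_val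
  have hd : Continuous (fun g : GL (Fin 2) ℝ => |((g : Matrix (Fin 2) (Fin 2) ℝ).det)|) := by
    simp only [Matrix.det_fin_two]
    exact (((hv.matrix_elem 0 0).mul (hv.matrix_elem 1 1)).sub
      ((hv.matrix_elem 0 1).mul (hv.matrix_elem 1 0))).abs
  exact (isOpen_lt continuous_const hd).inter (isOpen_lt hd continuous_const)
section MainAux
variable (t₀ : ℝ) (S : B3 →* GL (Fin 2) ℝ)

noncomputable def D (S : B3 →* GL (Fin 2) ℝ) : B3 →* ℝˣ :=
  (Matrix.GeneralLinearGroup.det).comp S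

end MainAux


lemma abs_zpow_real (a : ℝ) (n : ℤ) : |a ^ n| = |a| ^ n := by
  rcases n with m | m
  · simpa using abs_pow a m
  · simp [zpow_negSucc, abs_inv, abs_pow]

lemma int_eq_of_close {k l : ℤ} (h : |(k : ℝ) - (l : ℝ)| < 1/2) : k = l := by
  have h2 : ((|k - l| : ℤ) : ℝ) < 1 := by
    push_cast
    calc |(k : ℝ) - l| < 1/2 := h
      _ < 1 := by norm_num
  have h3 : |k - l| < 1 := by exact_mod_cast h2
  rwa [Int.abs_lt_one_iff, sub_eq_zero] at h3

theorem burau_B3_discrete_of_discrete_on_N (t₀ : ℝ) (h0 : t₀ ≠ 0)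
    (S : B3 →* GL (Fin 2) ℝ) (hS : IsBurau3 t₀ S)
    (hN : DiscreteTopology ↥(N3.map S)) :
    DiscreteTopology ↥S.range := by
  obtain ⟨hS0, hS1⟩ := hS
  by_cases hone : t₀ = 1 ∨ t₀ = -1
  · -- integer-entries case
    obtain ⟨u, hu⟩ : ∃ u : ℤ, (u : ℝ) = t₀ := by
      rcases hone with h | h
      · exact ⟨1, by simp [h]⟩
      · exact ⟨-1, by simp [h]⟩
    have ht2 : t₀ * t₀ = 1 := by rcases hone with h | h <;> rw [h] <;> norm_num
    have hinv0 : (((S (b3 0))⁻¹ : GL (Fin 2) ℝ) : Matrix (Fin 2) (Fin 2) ℝ)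
        = !![-t₀, t₀; 0, 1] := by
      apply inv_val_eq
      rw [hS0]
      ext i j
      fin_cases i <;> fin_cases j <;>
        simp [Matrix.mul_apply, Fin.sum_univ_two, Matrix.one_apply] <;>
        first
          | linear_combination ht2
          | linear_combination -ht2
          | ring
    have hinv1 : (((S (b3 1))⁻¹ : GL (Fin 2) ℝ) : Matrix (Fin 2) (Fin 2) ℝ)
        = !![1, 0; 1, -t₀] := by
      apply inv_val_eq
      rw [hS1]
      ext i j
      fin_cases i <;> fin_cases j <;>
        simp [Matrix.mul_apply, Fin.sum_univ_two, Matrix.one_apply] <;>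
        first
          | linear_combination ht2
          | linear_combination -ht2
          | ring
    have hrange : ∀ g : B3, S g ∈ intEntries := by
      intro g
      have hg : g ∈ intEntries.comap S := by
        apply PresentedGroup.generated_by
        intro j
        fin_cases j
        · show S (b3 0) ∈ intEntries
          refine ⟨?_, ?_⟩
          · rw [hS0]
            exact intM_explicit ⟨-u, by push_cast [hu]; ring⟩ ⟨1, by norm_num⟩
              ⟨0, by norm_num⟩ ⟨1, by norm_num⟩
          · rw [hinv0]
            exact intM_explicit ⟨-u, by push_cast [hu]; ring⟩ ⟨u, hu⟩
              ⟨0, by norm_num⟩ ⟨1, by norm_num⟩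
        · show S (b3 1) ∈ intEntries
          refine ⟨?_, ?_⟩
          · rw [hS1]
            exact intM_explicit ⟨1, by norm_num⟩ ⟨0, by norm_num⟩
              ⟨u, hu⟩ ⟨-u, by push_cast [hu]; ring⟩
          · rw [hinv1]
            exact intM_explicit ⟨1, by norm_num⟩ ⟨0, by norm_num⟩
              ⟨1, by norm_num⟩ ⟨-u, by push_cast [hu]; ring⟩
      exact hg
    apply discrete_of_open_one {g : GL (Fin 2) ℝ |
      ∀ i j, |(g : Matrix (Fin 2) (Fin 2) ℝ) i j - (1 : Matrix (Fin 2) (Fin 2) ℝ) i j| < 1/2}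
      isOpen_near_one
    · intro i j
      simp
    · rintro x hx ⟨g, rfl⟩
      have hint := (hrange g).1
      apply Units.ext
      apply Matrix.ext
      intro i j
      rw [Units.val_one]
      obtain ⟨k, hk⟩ := hint i j
      obtain ⟨l, hl⟩ := intM_one i j
      have hx' := hx i j
      rw [← hk, ← hl] at hx' ⊢
      have : k = l := int_eq_of_close hx'
      rw [this]
  · -- |t₀| ≠ 1 case
    push_neg at hone
    obtain ⟨ht1, htm1⟩ := hone
    set b := |t₀| with hb
    have hb0 : 0 < b := abs_pos.mpr h0
    have hb1 : b ≠ 1 := by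
      intro h
      rcases abs_eq (by norm_num : (0:ℝ) ≤ 1) |>.mp h with h' | h'
      · exact ht1 h'
      · exact htm1 h'
    set c := max b b⁻¹ with hc
    have hc1 : 1 < c := by
      rcases lt_or_gt_of_ne hb1 with h | h
      · exact lt_of_lt_of_le ((one_lt_inv₀ hb0).mpr h) (le_max_right _ _)
      · exact lt_of_lt_of_le h (le_max_left _ _)
    -- determinant facts
    have hD0val : ((D S (b3 0) : ℝˣ) : ℝ) = -t₀ := by
      show Matrix.det ((S (b3 0)) : Matrix (Fin 2) (Fin 2) ℝ) = -t₀
      rw [hS0, Matrix.det_fin_two_of]; ring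
    have hD1val : ((D S (b3 1) : ℝˣ) : ℝ) = -t₀ := by
      show Matrix.det ((S (b3 1)) : Matrix (Fin 2) (Fin 2) ℝ) = -t₀
      rw [hS1, Matrix.det_fin_two_of]; ring
    have hD01 : D S (b3 0) = D S (b3 1) := Units.ext (hD0val.trans hD1val.symm)
    have hker : ∀ h ∈ N3, D S h = 1 := by
      have hle : N3 ≤ (D S).ker := by
        rw [N3, Subgroup.closure_le]
        rintro x (rfl | rfl)
        · rw [SetLike.mem_coe, MonoidHom.mem_ker,
            show a₁ = (b3 0)⁻¹ * b3 1 from rfl, _root_.map_mul, map_inv, hD01,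
            inv_mul_cancel]
        · rw [SetLike.mem_coe, MonoidHom.mem_ker,
            show a₂ = b3 1 * (b3 0)⁻¹ from rfl, _root_.map_mul, map_inv, hD01,
            mul_inv_cancel]
      intro h hh
      exact hle hh
    obtain ⟨V, hVopen, hV1, hVprop⟩ := exists_open_of_discrete hN
    apply discrete_of_open_one ({g : GL (Fin 2) ℝ |
        c⁻¹ < |((g : Matrix (Fin 2) (Fin 2) ℝ).det)| ∧
          |((g : Matrix (Fin 2) (Fin 2) ℝ).det)| < c} ∩ V)
      ((isOpen_det_between c).inter hVopen)
    · have h1det : |(((1 : GL (Fin 2) ℝ) : Matrix (Fin 2) (Fin 2) ℝ)).det| = 1 := by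
        simp
      exact ⟨⟨by rw [h1det]; exact inv_lt_one_of_one_lt₀ hc1,
        by rw [h1det]; exact hc1⟩, hV1⟩
    · rintro x ⟨hxU, hxV⟩ ⟨g, rfl⟩
      set n := Multiplicative.toAdd (e g) with hn
      have hdec := decomp g
      have hDg : D S g = (D S (b3 0)) ^ n := by
        have h1 : D S g * (D S (b3 0)) ^ (-n) = 1 := by
          rw [← map_zpow, ← _root_.map_mul]
          exact hker _ hdec
        have h2 := mul_eq_one_iff_eq_inv.mp h1
        rwa [_root_.zpow_neg, inv_inv] at h2
      have habs : |((S g : Matrix (Fin 2) (Fin 2) ℝ).det)| = b ^ n := by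
        have hval : ((D S g : ℝˣ) : ℝ) = (-t₀) ^ n := by
          rw [hDg, Units.val_zpow_eq_zpow_val, hD0val]
        have : ((S g : Matrix (Fin 2) (Fin 2) ℝ).det) = (-t₀) ^ n := hval
        rw [this, abs_zpow_real, abs_neg]
      simp only [Set.mem_setOf_eq] at hxU
      rw [habs] at hxU
      have hn0 : n = 0 := abs_zpow_zero hb0 hb1 n hxU.1 hxU.2
      rw [← hn, hn0] at hdec
      simp only [neg_zero, zpow_zero, mul_one] at hdec
      exact hVprop _ hxV ⟨g, hdec, rfl⟩
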